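/- Let A be a unital Banach algebra, D : A → A an additive map satisfying the Leibniz rule, and r > 1. Let 0 < δ ≤ 1 and let a ∈ A be invertible with Σ_{k=0}^{∞} ‖D^k(a)‖/(k!)^r ≤ 1 and ‖a⁻¹‖ ≤ 1/δ. Then Σ_{k=0}^{∞} ‖D^k(a⁻¹)‖/(k!)^r ≤ δ^{−1} + Σ_{m=1}^{∞} δ^{−m−1}/(m!)^{r−1} = δ^{−1}·v_{r−1}(δ^{−1}), where v_s(x) = Σ_{j=0}^{∞} |x|^j/(j!)^s. -/

import Mathlib

open scoped ENNReal

open Finset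

/-- Iterated Leibniz rule for an additive map satisfying the Leibniz identity. -/
lemma nci_iter_leibniz {A : Type*} [NormedRing A] (D : A → A)
    (hadd : ∀ x y : A, D (x + y) = D x + D y)
    (hmul : ∀ x y : A, D (x * y) = x * D y + D x * y) (k : ℕ) (x y : A) :
    D^[k] (x * y) = ∑ j ∈ Finset.range (k + 1),
      (k.choose j) • (D^[j] x * D^[k - j] y) := by
  let Dh : A →+ A := AddMonoidHom.mk' D hadd
  have hD : ∀ z : A, Dh z = D z := fun _ => rfl
  induction k with
  | zero => simp
  | succ n ih =>
    rw [Function.iterate_succ_apply', ih, ← hD, map_sum]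
    have hterm : ∀ j ∈ Finset.range (n + 1),
        Dh ((n.choose j) • (D^[j] x * D^[n - j] y)) =
          (n.choose j) • (D^[j] x * D^[n + 1 - j] y)
          + (n.choose j) • (D^[j + 1] x * D^[n - j] y) := by
      intro j hj
      have hj' : j ≤ n := Nat.lt_succ_iff.mp (Finset.mem_range.mp hj)
      have h1 : n + 1 - j = (n - j) + 1 := by omega
      rw [map_nsmul, hD, hmul, h1, Function.iterate_succ_apply' D (n - j) y,
        Function.iterate_succ_apply' D j x, smul_add]
    rw [Finset.sum_congr rfl hterm, Finset.sum_add_distrib]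
    set S1 := ∑ j ∈ Finset.range n, (n.choose (j+1)) • (D^[j+1] x * D^[n - j] y) with hS1
    set S2 := ∑ j ∈ Finset.range (n+1), (n.choose j) • (D^[j+1] x * D^[n - j] y) with hS2
    have hA1 : ∑ j ∈ Finset.range (n+1), (n.choose j) • (D^[j] x * D^[n + 1 - j] y)
        = x * D^[n+1] y + S1 := by
      rw [Finset.sum_range_succ' (fun j => (n.choose j) • (D^[j] x * D^[n + 1 - j] y)) n]
      simp only [Nat.add_sub_add_right, Nat.choose_zero_right, one_smul, Nat.sub_zero,
        Function.iterate_zero_apply]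
      rw [add_comm]
    have hS1' : ∑ j ∈ Finset.range (n+1), (n.choose (j+1)) • (D^[j+1] x * D^[n - j] y) = S1 := by
      rw [Finset.sum_range_succ]
      simp [hS1]
    have hrhs : ∑ j ∈ Finset.range (n + 2), ((n+1).choose j) • (D^[j] x * D^[n + 1 - j] y)
        = (x * D^[n+1] y + S1) + S2 := by
      rw [Finset.sum_range_succ' (fun j => ((n+1).choose j) • (D^[j] x * D^[n + 1 - j] y)) (n+1)]
      simp only [Nat.add_sub_add_right, Nat.choose_zero_right, one_smul, Nat.sub_zero,
        Function.iterate_zero_apply, Nat.choose_succ_succ]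
      rw [add_comm, add_assoc]
      congr 1
      rw [← hS1', hS2, ← Finset.sum_add_distrib]
      apply Finset.sum_congr rfl
      intro j hj
      rw [add_smul, add_comm]
    rw [hA1, hrhs]


lemma nci_iter_one {A : Type*} [NormedRing A] (D : A → A)
    (hadd : ∀ x y : A, D (x + y) = D x + D y)
    (hmul : ∀ x y : A, D (x * y) = x * D y + D x * y) (k : ℕ) :
    D^[k + 1] (1 : A) = 0 := by
  have h0 : D 0 = 0 := by
    have := hadd 0 0
    simpa using this.symm
  have h1 : D 1 = 0 := by
    have := hmul 1 1
    simp only [one_mul, mul_one] at this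
    have : D 1 + D 1 = D 1 := by rw [← this]
    exact (add_eq_left).mp (by rw [add_comm] at this; exact this)
  induction k with
  | zero => simpa using h1
  | succ n ih =>
    rw [Function.iterate_succ_apply', ih, h0]

/-- `N.choose i ≥ N` for `1 ≤ i < N`. -/
lemma nci_choose_ge {N i : ℕ} (h1 : 1 ≤ i) (h2 : i < N) : N ≤ N.choose i := by
  induction N with
  | zero => omega
  | succ n ih =>
    rcases Nat.lt_or_ge i n with hin | hin
    · -- i < n, use Pascal
      obtain ⟨i', rfl⟩ : ∃ i', i = i' + 1 := ⟨i - 1, by omega⟩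
      have hp : 0 < n.choose i' := Nat.choose_pos (by omega)
      have hge : n ≤ n.choose (i' + 1) := ih (by omega)
      rw [Nat.choose_succ_succ]
      simp only [Nat.succ_eq_add_one]
      omega
    · -- i = n
      have : i = n := by omega
      subst this
      rw [Nat.choose_succ_self_right]


lemma nci_conv (f g : ℕ → ℝ≥0∞) :
    ∑' n : ℕ, ∑ j ∈ Finset.range (n + 1), f j * g (n - j)
      = (∑' j : ℕ, f j) * ∑' n : ℕ, g n := by
  have key : ∀ n : ℕ, ∑ j ∈ Finset.range (n + 1), f j * g (n - j)
      = ∑' j : ℕ, (if j ≤ n then f j * g (n - j) else 0) := by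
    intro n
    rw [tsum_eq_sum (s := Finset.range (n + 1))]
    · apply Finset.sum_congr rfl
      intro j hj
      rw [if_pos (Nat.lt_succ_iff.mp (Finset.mem_range.mp hj))]
    · intro j hj
      rw [if_neg (fun h => hj (Finset.mem_range.mpr (Nat.lt_succ_iff.mpr h)))]
  simp_rw [key]
  rw [ENNReal.tsum_comm]
  have inner : ∀ j : ℕ, (∑' n : ℕ, if j ≤ n then f j * g (n - j) else 0)
      = f j * ∑' i : ℕ, g i := by
    intro j
    rw [← ENNReal.tsum_mul_left]
    have hinj : Function.Injective (fun i : ℕ => i + j) := add_left_injective j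
    rw [← Function.Injective.tsum_eq hinj (f := fun n => if j ≤ n then f j * g (n - j) else 0)]
    · apply tsum_congr
      intro i
      show (if j ≤ i + j then f j * g (i + j - j) else 0) = f j * g i
      rw [if_pos (Nat.le_add_left j i), Nat.add_sub_cancel]
    · intro n hn
      simp only [Function.mem_support] at hn
      by_cases h : j ≤ n
      · exact ⟨n - j, by simp; omega⟩
      · exact absurd (if_neg h) hn
  simp_rw [inner]
  rw [ENNReal.tsum_mul_right]

/-- Iterated tail bound used in the norm-controlled inversion argument. -/
noncomputable def nciT (r : ℝ) (E : ℝ≥0∞) (C : ℕ → ℝ≥0∞) : ℕ → ℕ → ℝ≥0∞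
  | 0, k => if k = 0 then E else 0
  | _ + 1, 0 => 0
  | m + 1, n + 1 => E * ∑ j ∈ Finset.range (n + 1),
      ENNReal.ofReal ((((n + 1).choose (j + 1) : ℕ) : ℝ) ^ (1 - r)) * C (j + 1)
        * nciT r E C m (n - j)

lemma nciT_vanish (r : ℝ) (E : ℝ≥0∞) (C : ℕ → ℝ≥0∞) :
    ∀ m k : ℕ, k < m → nciT r E C m k = 0 := by
  intro m
  induction m with
  | zero => intro k h; omega
  | succ m ih =>
    intro k h
    match k with
    | 0 => rfl
    | n + 1 =>
      rw [nciT]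
      have : ∀ j ∈ Finset.range (n + 1),
          ENNReal.ofReal ((((n + 1).choose (j + 1) : ℕ) : ℝ) ^ (1 - r)) * C (j + 1)
            * nciT r E C m (n - j) = 0 := by
        intro j hj
        rw [ih (n - j) (by omega), mul_zero]
      rw [Finset.sum_eq_zero this, mul_zero]

lemma nciT_tsum_le (r : ℝ) (hr : 1 < r) (E : ℝ≥0∞) (C : ℕ → ℝ≥0∞)
    (hC : (∑' j : ℕ, C (j + 1)) ≤ 1) :
    ∀ m : ℕ, (∑' k : ℕ, nciT r E C m k)
      ≤ E ^ (m + 1) * ENNReal.ofReal ((m.factorial : ℝ) ^ (1 - r)) := by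
  intro m
  induction m with
  | zero =>
    simp_rw [nciT]
    rw [tsum_eq_single 0 (by intro b hb; rw [if_neg hb])]
    simp [Real.one_rpow]
  | succ m ih =>
    set G : ℝ≥0∞ := ENNReal.ofReal (((m + 1 : ℕ) : ℝ) ^ (1 - r)) with hG
    have hstep : (∑' k : ℕ, nciT r E C (m + 1) k)
        ≤ E * G * ((∑' j : ℕ, C (j + 1)) * ∑' k : ℕ, nciT r E C m k) := by
      rw [tsum_eq_zero_add' (f := fun k => nciT r E C (m+1) k) ENNReal.summable]
      rw [show nciT r E C (m + 1) 0 = 0 from by rw [nciT], zero_add]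
      have hterm : ∀ n : ℕ, nciT r E C (m + 1) (n + 1)
          ≤ E * G * ∑ j ∈ Finset.range (n + 1), C (j + 1) * nciT r E C m (n - j) := by
        intro n
        rw [nciT]
        have hsum : ∑ j ∈ Finset.range (n + 1),
            ENNReal.ofReal ((((n + 1).choose (j + 1) : ℕ) : ℝ) ^ (1 - r)) * C (j + 1)
              * nciT r E C m (n - j)
            ≤ ∑ j ∈ Finset.range (n + 1), G * (C (j + 1) * nciT r E C m (n - j)) := by
          apply Finset.sum_le_sum
          intro j hj
          have hj' : j ≤ n := Nat.lt_succ_iff.mp (Finset.mem_range.mp hj)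
          by_cases hT : nciT r E C m (n - j) = 0
          · rw [hT, mul_zero, mul_zero, mul_zero]
          · have hnj : m ≤ n - j := by
              by_contra hc
              exact hT (nciT_vanish r E C m (n - j) (by omega))
            have hch : m + 1 ≤ (n + 1).choose (j + 1) := by
              rcases Nat.lt_or_ge (j + 1) (n + 1) with hlt | hge
              · calc m + 1 ≤ n + 1 := by omega
                  _ ≤ (n + 1).choose (j + 1) := nci_choose_ge (by omega) hlt
              · have : j = n := by omega
                subst this
                have : m = 0 := by omega
                subst this
                simp
            have hβ : ENNReal.ofReal ((((n + 1).choose (j + 1) : ℕ) : ℝ) ^ (1 - r)) ≤ G := by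
              apply ENNReal.ofReal_le_ofReal
              apply Real.rpow_le_rpow_of_nonpos
              · positivity
              · exact_mod_cast hch
              · linarith
            rw [mul_assoc]
            exact mul_le_mul_left hβ _
        calc E * (∑ j ∈ Finset.range (n + 1),
              ENNReal.ofReal ((((n + 1).choose (j + 1) : ℕ) : ℝ) ^ (1 - r)) * C (j + 1)
                * nciT r E C m (n - j))
            ≤ E * ∑ j ∈ Finset.range (n + 1), G * (C (j + 1) * nciT r E C m (n - j)) :=
              mul_le_mul_right hsum E
          _ = E * G * ∑ j ∈ Finset.range (n + 1), C (j + 1) * nciT r E C m (n - j) := by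
              rw [← Finset.mul_sum, mul_assoc]
      calc (∑' n : ℕ, nciT r E C (m + 1) (n + 1))
          ≤ ∑' n : ℕ, E * G * ∑ j ∈ Finset.range (n + 1), C (j + 1) * nciT r E C m (n - j) :=
            ENNReal.tsum_le_tsum hterm
        _ = E * G * ∑' n : ℕ, ∑ j ∈ Finset.range (n + 1),
              (fun i => C (i + 1)) j * nciT r E C m (n - j) := by
            rw [ENNReal.tsum_mul_left]
        _ = E * G * ((∑' j : ℕ, C (j + 1)) * ∑' k : ℕ, nciT r E C m k) := by
            rw [nci_conv]
    calc (∑' k : ℕ, nciT r E C (m + 1) k)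
        ≤ E * G * ((∑' j : ℕ, C (j + 1)) * ∑' k : ℕ, nciT r E C m k) := hstep
      _ ≤ E * G * (1 * (E ^ (m + 1) * ENNReal.ofReal ((m.factorial : ℝ) ^ (1 - r)))) := by
          exact mul_le_mul_right (mul_le_mul' hC ih) _
      _ = E ^ (m + 2) * (G * ENNReal.ofReal ((m.factorial : ℝ) ^ (1 - r))) := by
          rw [one_mul]; ring
      _ = E ^ (m + 2) * ENNReal.ofReal (((m + 1).factorial : ℝ) ^ (1 - r)) := by
          congr 1
          rw [← ENNReal.ofReal_mul (by positivity), ← Real.mul_rpow (by positivity) (by positivity)]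
          congr 2
          rw [Nat.factorial_succ]
          push_cast
          ring
lemma nci_coef (r : ℝ) (c p q : ℕ) (hc : 0 < c) (hp : 0 < p) (hq : 0 < q) (x y : ℝ) :
    (c : ℝ) * (x * y) / (((c * p * q : ℕ) : ℝ)) ^ r
      = ((c : ℝ)) ^ (1 - r) * (x / (p : ℝ) ^ r) * (y / (q : ℝ) ^ r) := by
  have hc' : (0 : ℝ) < (c : ℝ) := by exact_mod_cast hc
  have hp' : (0 : ℝ) < (p : ℝ) := by exact_mod_cast hp
  have hq' : (0 : ℝ) < (q : ℝ) := by exact_mod_cast hq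
  have hcr : (0 : ℝ) < (c : ℝ) ^ r := Real.rpow_pos_of_pos hc' r
  have hpr : (0 : ℝ) < (p : ℝ) ^ r := Real.rpow_pos_of_pos hp' r
  have hqr : (0 : ℝ) < (q : ℝ) ^ r := Real.rpow_pos_of_pos hq' r
  push_cast
  rw [Real.mul_rpow (by positivity) (by positivity), Real.mul_rpow (by positivity) (by positivity),
    Real.rpow_sub hc', Real.rpow_one]
  field_simp

lemma nci_recursion {A : Type*} [NormedRing A] (D : A → A)
    (hadd : ∀ x y : A, D (x + y) = D x + D y)
    (hmul : ∀ x y : A, D (x * y) = x * D y + D x * y)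
    (r : ℝ) (a : Aˣ) (n : ℕ) :
    ENNReal.ofReal (‖D^[n + 1] (↑a⁻¹ : A)‖ / ((n + 1).factorial : ℝ) ^ r)
      ≤ ENNReal.ofReal ‖(↑a⁻¹ : A)‖ * ∑ j ∈ Finset.range (n + 1),
          ENNReal.ofReal ((((n + 1).choose (j + 1) : ℕ) : ℝ) ^ (1 - r))
          * ENNReal.ofReal (‖D^[j + 1] (↑a : A)‖ / ((j + 1).factorial : ℝ) ^ r)
          * ENNReal.ofReal (‖D^[n - j] (↑a⁻¹ : A)‖ / ((n - j).factorial : ℝ) ^ r) := by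
  set b : A := (↑a⁻¹ : A) with hb
  set S : A := ∑ j ∈ Finset.range (n + 1),
      ((n + 1).choose (j + 1)) • (D^[j + 1] (↑a : A) * D^[n - j] b) with hS
  -- step 1: algebraic identity
  have hid : (↑a : A) * D^[n + 1] b = -S := by
    have h1 : D^[n + 1] ((↑a : A) * b) = 0 := by
      rw [hb, Units.mul_inv, nci_iter_one D hadd hmul]
    have h2 := nci_iter_leibniz D hadd hmul (n + 1) (↑a : A) b
    rw [h1] at h2
    rw [Finset.sum_range_succ'
      (fun j => ((n + 1).choose j) • (D^[j] (↑a : A) * D^[n + 1 - j] b)) (n + 1)] at h2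
    simp only [Nat.add_sub_add_right, Nat.choose_zero_right, one_smul, Nat.sub_zero,
      Function.iterate_zero_apply] at h2
    have h4 : (↑a : A) * D^[n + 1] b + S = 0 := by rw [add_comm]; exact h2.symm
    exact eq_neg_of_add_eq_zero_left h4
  have hDb : D^[n + 1] b = -(b * S) := by
    have h3 : D^[n + 1] b = (↑a⁻¹ : A) * ((↑a : A) * D^[n + 1] b) :=
      (Units.inv_mul_cancel_left a _).symm
    rw [hid, mul_neg] at h3
    exact h3
  -- step 2: norm bound
  have hnorm : ‖D^[n + 1] b‖ ≤ ‖b‖ * ∑ j ∈ Finset.range (n + 1),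
      (((n + 1).choose (j + 1) : ℕ) : ℝ) * (‖D^[j + 1] (↑a : A)‖ * ‖D^[n - j] b‖) := by
    rw [hDb, norm_neg]
    calc ‖b * S‖ ≤ ‖b‖ * ‖S‖ := norm_mul_le _ _
      _ ≤ ‖b‖ * ∑ j ∈ Finset.range (n + 1),
          (((n + 1).choose (j + 1) : ℕ) : ℝ) * (‖D^[j + 1] (↑a : A)‖ * ‖D^[n - j] b‖) := by
        apply mul_le_mul_of_nonneg_left _ (norm_nonneg b)
        calc ‖S‖ ≤ ∑ j ∈ Finset.range (n + 1),
            ‖((n + 1).choose (j + 1)) • (D^[j + 1] (↑a : A) * D^[n - j] b)‖ :=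
              norm_sum_le _ _
          _ ≤ ∑ j ∈ Finset.range (n + 1),
              (((n + 1).choose (j + 1) : ℕ) : ℝ) * (‖D^[j + 1] (↑a : A)‖ * ‖D^[n - j] b‖) := by
            apply Finset.sum_le_sum
            intro j hj
            calc ‖((n + 1).choose (j + 1)) • (D^[j + 1] (↑a : A) * D^[n - j] b)‖
                ≤ (((n + 1).choose (j + 1) : ℕ) : ℝ) * ‖D^[j + 1] (↑a : A) * D^[n - j] b‖ :=
                  norm_nsmul_le
              _ ≤ (((n + 1).choose (j + 1) : ℕ) : ℝ)
                  * (‖D^[j + 1] (↑a : A)‖ * ‖D^[n - j] b‖) := by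
                  apply mul_le_mul_of_nonneg_left (norm_mul_le _ _) (by positivity)
  -- step 3: divide and convert
  have hK : (0 : ℝ) < (((n + 1).factorial : ℕ) : ℝ) ^ r :=
    Real.rpow_pos_of_pos (by exact_mod_cast (n + 1).factorial_pos) r
  have hdiv : ‖D^[n + 1] b‖ / (((n + 1).factorial : ℕ) : ℝ) ^ r
      ≤ ‖b‖ * ∑ j ∈ Finset.range (n + 1),
          ((((n + 1).choose (j + 1) : ℕ) : ℝ)) ^ (1 - r)
          * (‖D^[j + 1] (↑a : A)‖ / (((j + 1).factorial : ℕ) : ℝ) ^ r)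
          * (‖D^[n - j] b‖ / (((n - j).factorial : ℕ) : ℝ) ^ r) := by
    have step : ‖D^[n + 1] b‖ / (((n + 1).factorial : ℕ) : ℝ) ^ r
        ≤ (‖b‖ * ∑ j ∈ Finset.range (n + 1),
            (((n + 1).choose (j + 1) : ℕ) : ℝ) * (‖D^[j + 1] (↑a : A)‖ * ‖D^[n - j] b‖))
            / (((n + 1).factorial : ℕ) : ℝ) ^ r :=
      div_le_div_of_nonneg_right hnorm hK.le  -- maybe wrong name
    refine step.trans (le_of_eq ?_)
    rw [mul_div_assoc, Finset.sum_div]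
    congr 1
    apply Finset.sum_congr rfl
    intro j hj
    have hj' : j + 1 ≤ n + 1 := Nat.succ_le_succ (Nat.lt_succ_iff.mp (Finset.mem_range.mp hj))
    have hfact : (n + 1).factorial
        = (n + 1).choose (j + 1) * (j + 1).factorial * (n - j).factorial := by
      have := Nat.choose_mul_factorial_mul_factorial hj'
      rw [Nat.add_sub_add_right] at this
      omega
    rw [hfact]
    exact nci_coef r ((n + 1).choose (j + 1)) (j + 1).factorial (n - j).factorial
      (Nat.choose_pos hj') (j + 1).factorial_pos (n - j).factorial_pos _ _
  -- step 4: ofReal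
  calc ENNReal.ofReal (‖D^[n + 1] b‖ / ((n + 1).factorial : ℝ) ^ r)
      ≤ ENNReal.ofReal (‖b‖ * ∑ j ∈ Finset.range (n + 1),
          ((((n + 1).choose (j + 1) : ℕ) : ℝ)) ^ (1 - r)
          * (‖D^[j + 1] (↑a : A)‖ / (((j + 1).factorial : ℕ) : ℝ) ^ r)
          * (‖D^[n - j] b‖ / (((n - j).factorial : ℕ) : ℝ) ^ r)) :=
        ENNReal.ofReal_le_ofReal hdiv
    _ = ENNReal.ofReal ‖b‖ * ∑ j ∈ Finset.range (n + 1),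
          ENNReal.ofReal ((((n + 1).choose (j + 1) : ℕ) : ℝ) ^ (1 - r))
          * ENNReal.ofReal (‖D^[j + 1] (↑a : A)‖ / ((j + 1).factorial : ℝ) ^ r)
          * ENNReal.ofReal (‖D^[n - j] b‖ / ((n - j).factorial : ℝ) ^ r) := by
        rw [ENNReal.ofReal_mul (norm_nonneg b)]
        congr 1
        rw [ENNReal.ofReal_sum_of_nonneg]
        · apply Finset.sum_congr rfl
          intro j hj
          rw [ENNReal.ofReal_mul (by positivity), ENNReal.ofReal_mul (by positivity)]
        · intro j hj
          positivity
/-- **Norm-controlled inversion for the Gevrey-type Dales-Davie algebra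
`D_1((k!)^r, A)`.** Let `A` be a unital Banach algebra, `D` an additive map
satisfying the Leibniz rule, and `r > 1`. Let `0 < δ ≤ 1` and let `a` be
invertible with `Σ_k ‖D^k(a)‖/(k!)^r ≤ 1` and `‖a⁻¹‖ ≤ 1/δ`. Then
`Σ_k ‖D^k(a⁻¹)‖/(k!)^r ≤ δ⁻¹ + Σ_{m≥1} δ^{−m−1}/(m!)^{r−1}
 = δ⁻¹·v_{r−1}(δ⁻¹)` where `v_s(x) = Σ_j |x|^j/(j!)^s`. -/
theorem dales_davie_gevrey_nci {A : Type*} [NormedRing A] [CompleteSpace A]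
    (D : A → A)
    (hadd : ∀ x y : A, D (x + y) = D x + D y)
    (hmul : ∀ x y : A, D (x * y) = x * D y + D x * y)
    (r : ℝ) (hr : 1 < r)
    (δ : ℝ) (hδ0 : 0 < δ) (hδ1 : δ ≤ 1)
    (a : Aˣ)
    (ha : (∑' k : ℕ,
        ENNReal.ofReal (‖D^[k] (↑a : A)‖ / (k.factorial : ℝ) ^ r)) ≤ 1)
    (hainv : ‖(↑a⁻¹ : A)‖ ≤ 1 / δ) :
    (∑' k : ℕ,
        ENNReal.ofReal (‖D^[k] (↑a⁻¹ : A)‖ / (k.factorial : ℝ) ^ r)) ≤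
      ENNReal.ofReal δ⁻¹ +
        ∑' m : ℕ,
          ENNReal.ofReal (δ⁻¹ ^ (m + 2) / ((m + 1).factorial : ℝ) ^ (r - 1))
    ∧ ENNReal.ofReal δ⁻¹ +
        ∑' m : ℕ,
          ENNReal.ofReal (δ⁻¹ ^ (m + 2) / ((m + 1).factorial : ℝ) ^ (r - 1))
      = ENNReal.ofReal δ⁻¹ *
          ∑' j : ℕ, ENNReal.ofReal (|δ⁻¹| ^ j / (j.factorial : ℝ) ^ (r - 1)) := by
  have hδinv : (0 : ℝ) < δ⁻¹ := inv_pos.mpr hδ0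
  set b : A := (↑a⁻¹ : A) with hbdef
  set E : ℝ≥0∞ := ENNReal.ofReal δ⁻¹ with hE
  set C : ℕ → ℝ≥0∞ := fun k => ENNReal.ofReal (‖D^[k] (↑a : A)‖ / (k.factorial : ℝ) ^ r)
    with hCdef
  have hb : ‖b‖ ≤ δ⁻¹ := by rw [← one_div]; exact hainv
  have hEb : ENNReal.ofReal ‖b‖ ≤ E := ENNReal.ofReal_le_ofReal hb
  have hC : (∑' j : ℕ, C (j + 1)) ≤ 1 := by
    calc (∑' j : ℕ, C (j + 1)) ≤ C 0 + ∑' j : ℕ, C (j + 1) := le_add_self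
      _ = ∑' k : ℕ, C k := (tsum_eq_zero_add' (f := C) ENNReal.summable).symm
      _ ≤ 1 := ha
  -- the main recursion bound
  have hU : ∀ k : ℕ, ENNReal.ofReal (‖D^[k] b‖ / (k.factorial : ℝ) ^ r)
      ≤ ∑ m ∈ Finset.range (k + 1), nciT r E C m k := by
    intro k
    induction k using Nat.strong_induction_on with
    | _ k ih =>
      match k with
      | 0 =>
        have h00 : ∑ m ∈ Finset.range (0 + 1), nciT r E C m 0 = E := by
          rw [show (0 + 1) = 1 from rfl, Finset.range_one, Finset.sum_singleton]
          rw [nciT]; rfl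
        rw [h00]
        simp only [Function.iterate_zero_apply, Nat.factorial_zero, Nat.cast_one,
          Real.one_rpow, div_one]
        exact hEb
      | n + 1 =>
        have hrec := nci_recursion D hadd hmul r a n
        rw [← hbdef] at hrec
        have hmid : ENNReal.ofReal ‖b‖ * ∑ j ∈ Finset.range (n + 1),
              ENNReal.ofReal ((((n + 1).choose (j + 1) : ℕ) : ℝ) ^ (1 - r))
              * ENNReal.ofReal (‖D^[j + 1] (↑a : A)‖ / ((j + 1).factorial : ℝ) ^ r)
              * ENNReal.ofReal (‖D^[n - j] b‖ / ((n - j).factorial : ℝ) ^ r)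
            ≤ E * ∑ j ∈ Finset.range (n + 1),
              ENNReal.ofReal ((((n + 1).choose (j + 1) : ℕ) : ℝ) ^ (1 - r))
              * C (j + 1) * ∑ m ∈ Finset.range (n + 1), nciT r E C m (n - j) := by
          apply mul_le_mul' hEb
          apply Finset.sum_le_sum
          intro j hj
          have hj' : j ≤ n := Nat.lt_succ_iff.mp (Finset.mem_range.mp hj)
          apply mul_le_mul_right
          calc ENNReal.ofReal (‖D^[n - j] b‖ / ((n - j).factorial : ℝ) ^ r)
              ≤ ∑ m ∈ Finset.range ((n - j) + 1), nciT r E C m (n - j) := ih (n - j) (by omega)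
            _ ≤ ∑ m ∈ Finset.range (n + 1), nciT r E C m (n - j) :=
                Finset.sum_le_sum_of_subset (Finset.range_subset_range.mpr (by omega))
        have hswap : E * ∑ j ∈ Finset.range (n + 1),
              ENNReal.ofReal ((((n + 1).choose (j + 1) : ℕ) : ℝ) ^ (1 - r))
              * C (j + 1) * ∑ m ∈ Finset.range (n + 1), nciT r E C m (n - j)
            = ∑ m ∈ Finset.range (n + 1), nciT r E C (m + 1) (n + 1) := by
          have expand : ∀ j ∈ Finset.range (n + 1),
              ENNReal.ofReal ((((n + 1).choose (j + 1) : ℕ) : ℝ) ^ (1 - r))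
              * C (j + 1) * ∑ m ∈ Finset.range (n + 1), nciT r E C m (n - j)
              = ∑ m ∈ Finset.range (n + 1),
                ENNReal.ofReal ((((n + 1).choose (j + 1) : ℕ) : ℝ) ^ (1 - r))
                * C (j + 1) * nciT r E C m (n - j) := by
            intro j hj
            rw [Finset.mul_sum]
          rw [Finset.sum_congr rfl expand, Finset.sum_comm, Finset.mul_sum]
          apply Finset.sum_congr rfl
          intro m hm
          rw [nciT]
        calc ENNReal.ofReal (‖D^[n + 1] b‖ / ((n + 1).factorial : ℝ) ^ r)
            ≤ ∑ m ∈ Finset.range (n + 1), nciT r E C (m + 1) (n + 1) :=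
              le_of_le_of_eq (hrec.trans hmid) hswap
          _ = ∑ m ∈ Finset.range (n + 2), nciT r E C m (n + 1) := by
              rw [Finset.sum_range_succ' (fun m => nciT r E C m (n + 1)) (n + 1)]
              have h0 : nciT r E C 0 (n + 1) = 0 := by rw [nciT]; rfl
              rw [h0, add_zero]
  -- sum over k
  have htot : (∑' k : ℕ, ENNReal.ofReal (‖D^[k] b‖ / (k.factorial : ℝ) ^ r))
      ≤ ∑' m : ℕ, E ^ (m + 1) * ENNReal.ofReal ((m.factorial : ℝ) ^ (1 - r)) := by
    calc (∑' k : ℕ, ENNReal.ofReal (‖D^[k] b‖ / (k.factorial : ℝ) ^ r))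
        ≤ ∑' k : ℕ, ∑ m ∈ Finset.range (k + 1), nciT r E C m k := ENNReal.tsum_le_tsum hU
      _ = ∑' k : ℕ, ∑' m : ℕ, nciT r E C m k := by
          apply tsum_congr
          intro k
          rw [tsum_eq_sum (s := Finset.range (k + 1))]
          intro m hm
          exact nciT_vanish r E C m k (by
            simp only [Finset.mem_range, not_lt] at hm; omega)
      _ = ∑' m : ℕ, ∑' k : ℕ, nciT r E C m k := ENNReal.tsum_comm
      _ ≤ ∑' m : ℕ, E ^ (m + 1) * ENNReal.ofReal ((m.factorial : ℝ) ^ (1 - r)) :=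
          ENNReal.tsum_le_tsum (nciT_tsum_le r hr E C hC)
  have hterm_eq : ∀ m : ℕ, E ^ (m + 2) * ENNReal.ofReal (((m + 1).factorial : ℝ) ^ (1 - r))
      = ENNReal.ofReal (δ⁻¹ ^ (m + 2) / ((m + 1).factorial : ℝ) ^ (r - 1)) := by
    intro m
    rw [hE, ← ENNReal.ofReal_pow hδinv.le, ← ENNReal.ofReal_mul (by positivity)]
    congr 1
    rw [show (1 - r) = -(r - 1) by ring,
      Real.rpow_neg (by positivity), div_eq_mul_inv]
  have hsplit : (∑' m : ℕ, E ^ (m + 1) * ENNReal.ofReal ((m.factorial : ℝ) ^ (1 - r)))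
      = ENNReal.ofReal δ⁻¹
        + ∑' m : ℕ, ENNReal.ofReal (δ⁻¹ ^ (m + 2) / ((m + 1).factorial : ℝ) ^ (r - 1)) := by
    rw [tsum_eq_zero_add'
      (f := fun m => E ^ (m + 1) * ENNReal.ofReal ((m.factorial : ℝ) ^ (1 - r)))
      ENNReal.summable]
    congr 1
    · simp [hE, Real.one_rpow]
    · apply tsum_congr
      intro m
      exact hterm_eq m
  constructor
  · exact htot.trans (le_of_eq hsplit)
  · -- second conjunct
    have habs : |δ⁻¹| = δ⁻¹ := abs_of_pos hδinv
    rw [tsum_eq_zero_add'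
      (f := fun j => ENNReal.ofReal (|δ⁻¹| ^ j / (j.factorial : ℝ) ^ (r - 1)))
      ENNReal.summable]
    have h0 : ENNReal.ofReal (|δ⁻¹| ^ 0 / ((Nat.factorial 0 : ℕ) : ℝ) ^ (r - 1)) = 1 := by
      simp [Real.one_rpow]
    rw [h0, mul_add, mul_one]
    congr 1
    rw [← ENNReal.tsum_mul_left]
    apply tsum_congr
    intro m
    rw [← ENNReal.ofReal_mul hδinv.le]
    congr 1
    rw [habs]
    field_simp
    rw [show m + 2 = (m + 1) + 1 by ring, pow_succ', ← mul_assoc, mul_one_div_cancel hδ0.ne', one_mul]
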